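/- arXiv:1812.08493 — 2 statements merged into one kernel-verified Lean document; each statement's English description precedes it below -/
import Mathlib

section
/- Suppose there exists a group homomorphism g_𝒰 : K₀^sp(𝒰)/im θ_𝒰 → K₀(𝒞) with g_𝒰 ∘ π_𝒰 = π_𝒞 ∘ j_𝒰. Then g_𝒰 and the homomorphism f_𝒰 : K₀(𝒞) → K₀^sp(𝒰)/im θ_𝒰 satisfying f_𝒰 ∘ π_𝒞 = π_𝒰 ∘ index_𝒰 are mutually inverse, so K₀^sp(𝒰)/im θ_𝒰 ≅ K₀(𝒞). (Proposition 3.4) -/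
open CategoryTheory CategoryTheory.Limits CategoryTheory.Pretriangulated ZeroObject

namespace ClusterK0

universe w v u

variable (k : Type w) [Field k]
variable (C : Type u) [Category.{v} C] [Preadditive C] [CategoryTheory.Linear k C]
  [HasZeroObject C] [HasShift C ℤ] [∀ n : ℤ, (shiftFunctor C n).Additive]
  [Pretriangulated C] [HasBinaryBiproducts C]

/-- The subgroup of relations defining the split Grothendieck group of the full
subcategory of `C` determined by the predicate `P`: isomorphism relations and
direct sum relations `[A ⊕ B] - [A] - [B]`. -/
def splitRel (P : C → Prop) : AddSubgroup (FreeAbelianGroup {X : C // P X}) :=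
  AddSubgroup.closure
    {x | (∃ A B : {X : C // P X}, Nonempty ((A : C) ≅ (B : C)) ∧
            x = FreeAbelianGroup.of A - FreeAbelianGroup.of B) ∨
         (∃ A B X : {X : C // P X}, Nonempty ((X : C) ≅ (A : C) ⊞ (B : C)) ∧
            x = FreeAbelianGroup.of X - FreeAbelianGroup.of A - FreeAbelianGroup.of B)}

/-- The split Grothendieck group `K₀^sp` of the full subcategory of `C` given by `P`. -/
abbrev K0sp (P : C → Prop) :=
  FreeAbelianGroup {X : C // P X} ⧸ splitRel C P

/-- The class `[X]` of an object `X` with `P X` in `K₀^sp`. -/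
def clsSp (P : C → Prop) (X : C) (hX : P X) : K0sp C P :=
  QuotientAddGroup.mk' (splitRel C P) (FreeAbelianGroup.of ⟨X, hX⟩)

/-- The subgroup of `K₀^sp(C)` generated by the elements `[A] - [B] + [C]` associated to
distinguished triangles `A ⟶ B ⟶ C ⟶ ΣA` of `C`. -/
def triRel : AddSubgroup (K0sp C (fun _ => True)) :=
  AddSubgroup.closure
    {x | ∃ T : Triangle C, (T ∈ distTriang C) ∧
      x = clsSp C (fun _ => True) T.obj₁ trivial - clsSp C (fun _ => True) T.obj₂ trivial
            + clsSp C (fun _ => True) T.obj₃ trivial}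

/-- The Grothendieck group of the triangulated category `C`. -/
abbrev K0 := K0sp C (fun _ => True) ⧸ triRel C

/-- The quotient homomorphism `π_C : K₀^sp(C) → K₀(C)`. -/
def piC : K0sp C (fun _ => True) →+ K0 C := QuotientAddGroup.mk' (triRel C)

/-- The class of an object of `C` in `K₀(C)`. -/
def cls (X : C) : K0 C := piC C (clsSp C (fun _ => True) X trivial)

section Part2

variable (k : Type w) [Field k]
variable (C : Type u) [Category.{v} C] [Preadditive C] [CategoryTheory.Linear k C]
  [HasZeroObject C] [HasShift C ℤ] [∀ n : ℤ, (shiftFunctor C n).Additive]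
  [Pretriangulated C] [HasBinaryBiproducts C]

/-- `P` defines a precovering subcategory of `C`. -/
def IsPrecovering (P : C → Prop) : Prop :=
  ∀ X : C, ∃ (U : C) (_ : P U) (μ : U ⟶ X),
    ∀ (U' : C), P U' → ∀ f : U' ⟶ X, ∃ g : U' ⟶ U, g ≫ μ = f

/-- `P` defines a preenveloping subcategory of `C`. -/
def IsPreenveloping (P : C → Prop) : Prop :=
  ∀ X : C, ∃ (U : C) (_ : P U) (ν : X ⟶ U),
    ∀ (U' : C), P U' → ∀ f : X ⟶ U', ∃ g : U ⟶ U', ν ≫ g = f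

/-- `P` defines an `m`-cluster tilting subcategory of the triangulated category `C`:
a functorially finite full subcategory `𝒰` with
`𝒰 = {C | Ext^{1..m-1}(𝒰,C)=0} = {C | Ext^{1..m-1}(C,𝒰)=0}`. -/
def IsClusterTilting (m : ℕ) (P : C → Prop) : Prop :=
  IsPrecovering C P ∧ IsPreenveloping C P ∧
  (∀ X : C, P X ↔ ∀ (U : C), P U → ∀ i : ℕ, 1 ≤ i → i ≤ m - 1 →
      ∀ f : U ⟶ X⟦(i : ℤ)⟧, f = 0) ∧
  (∀ X : C, P X ↔ ∀ (U : C), P U → ∀ i : ℕ, 1 ≤ i → i ≤ m - 1 →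
      ∀ f : X ⟶ U⟦(i : ℤ)⟧, f = 0)

/-- `μ : U ⟶ X` is a `𝒰`-cover of `X`: a right minimal `𝒰`-precover. -/
def IsCover (P : C → Prop) {U X : C} (μ : U ⟶ X) : Prop :=
  P U ∧ (∀ (U' : C), P U' → ∀ f : U' ⟶ X, ∃ g : U' ⟶ U, g ≫ μ = f) ∧
  (∀ φ : U ⟶ U, φ ≫ μ = μ → IsIso φ)

/-- `μ : U ⟶ X` is minimal right almost split in the subcategory given by `P`. -/
def IsMinRightAlmostSplit (P : C → Prop) {U X : C} (μ : U ⟶ X) : Prop :=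
  P U ∧ ¬ IsSplitEpi μ ∧
  (∀ (U' : C), P U' → ∀ f : U' ⟶ X, ¬ IsSplitEpi f → ∃ g : U' ⟶ U, g ≫ μ = f) ∧
  (∀ φ : U ⟶ U, φ ≫ μ = μ → IsIso φ)

/-- An object is indecomposable: nonzero, and any biproduct decomposition is trivial. -/
def Indecomp (X : C) : Prop :=
  ¬ IsZero X ∧ ∀ (A B : C), (X ≅ A ⊞ B) → IsZero A ∨ IsZero B

/-- `I` is a set of representatives of the isomorphism classes of indecomposable objects
of the subcategory given by `P` (denoted `Ind 𝒯` in the paper). -/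
structure IsInd (P : C → Prop) (I : Set C) : Prop where
  subset : ∀ M ∈ I, P M ∧ Indecomp C M
  complete : ∀ X : C, P X → Indecomp C X → ∃ M ∈ I, Nonempty (X ≅ M)
  unique : ∀ M ∈ I, ∀ M' ∈ I, Nonempty (M ≅ M') → M = M'

/-- The set `I = Ind 𝒯` is locally bounded. -/
def LocallyBounded (I : Set C) : Prop :=
  ∀ U ∈ I, {V | V ∈ I ∧ ∃ f : U ⟶ V, f ≠ 0}.Finite ∧
    {W | W ∈ I ∧ ∃ f : W ⟶ U, f ≠ 0}.Finite

/-- A Serre functor on the `k`-linear Hom-finite category `C`: a functor `S` with natural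
`k`-linear isomorphisms `Hom(X,Y) ≅ D Hom(Y, S X)`. -/
structure SerreFunctor where
  S : C ⥤ C
  equiv : ∀ X Y : C, (X ⟶ Y) ≃ₗ[k] Module.Dual k (Y ⟶ S.obj X)
  nat_left : ∀ {X X' Y : C} (f : X' ⟶ X) (g : X ⟶ Y) (h : Y ⟶ S.obj X'),
    equiv X' Y (f ≫ g) h = equiv X Y g (h ≫ S.map f)
  nat_right : ∀ {X Y Y' : C} (g : X ⟶ Y) (e : Y ⟶ Y') (h : Y' ⟶ S.obj X),
    equiv X Y' (g ≫ e) h = equiv X Y g (e ≫ h)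

/-- An Auslander--Reiten `(n+2)`-angle `SM → T_{n-1} → ⋯ → T_0 → M` in the subcategory
given by `P`, presented as a tower of triangles in `C` with intermediate objects
`X 1, …, X (n-1)` (where `X 0 = M` and `X n = SM`), in which the morphisms
`τ i : T i ⟶ X i` are `P`-covers for `1 ≤ i ≤ n-1` and `τ 0 : T 0 ⟶ M` is minimal
right almost split in the subcategory. -/
structure ARTower (n : ℕ) (P : C → Prop) (SM M : C) where
  T : ℕ → C
  X : ℕ → C
  a : ∀ i : ℕ, X (i + 1) ⟶ T i
  τ : ∀ i : ℕ, T i ⟶ X i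
  ξ : ∀ i : ℕ, X i ⟶ (X (i + 1))⟦(1 : ℤ)⟧
  hT : ∀ i, i < n → P (T i)
  hX0 : X 0 = M
  hXn : X n = SM
  hSM : P SM
  tri : ∀ i, i < n → (Triangle.mk (a i) (τ i) (ξ i) ∈ distTriang C)
  cover : ∀ i, 1 ≤ i → i < n → IsCover C P (τ i)
  mras : IsMinRightAlmostSplit C P (τ 0)

/-- The subgroup of `K₀^sp(𝒯)` generated by the elements
`-[M] + sign • [Sn M] + ∑ (-1)^i [T_i]` attached to the Auslander--Reiten
`(n+2)`-angles of the objects of `I = Ind 𝒯`. -/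
def arRel (n : ℕ) (P : C → Prop) (I : Set C) (Sn : C → C)
    (AR : ∀ M ∈ I, ARTower C n P (Sn M) M) (sign : ℤ) : AddSubgroup (K0sp C P) :=
  AddSubgroup.closure
    {x | ∃ (M : C) (hM : M ∈ I) (hPM : P M),
      x = -(clsSp C P M hPM) + sign • clsSp C P (Sn M) (AR M hM).hSM
          + ∑ i ∈ Finset.range n, ((-1 : ℤ)) ^ i •
              (if h : i < n then clsSp C P ((AR M hM).T i) ((AR M hM).hT i h) else 0)}

/-- For the Calabi--Yau case: the subgroup of `K₀^sp(𝒯)` generated by the elements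
`∑ (-1)^i [T_i]` attached to the Auslander--Reiten `(n+2)`-angles
`M → T_{n-1} → ⋯ → T_0 → M → Σⁿ M` of the objects of `I = Ind 𝒯`. -/
def arRelCY (n : ℕ) (P : C → Prop) (I : Set C)
    (AR : ∀ M ∈ I, ARTower C n P M M) : AddSubgroup (K0sp C P) :=
  AddSubgroup.closure
    {x | ∃ (M : C) (hM : M ∈ I),
      x = ∑ i ∈ Finset.range n, ((-1 : ℤ)) ^ i •
          (if h : i < n then clsSp C P ((AR M hM).T i) ((AR M hM).hT i h) else 0)}

/-- The subgroup of `K₀^sp(𝒮)` generated by the alternating sums `∑ (-1)^i [S_i]`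
over the `(d+2)`-angles of the `(d+2)`-angulated category `𝒮`, the latter being
presented as towers of triangles in `C`. -/
def angleRel (d : ℕ) (P : C → Prop) : AddSubgroup (K0sp C P) :=
  AddSubgroup.closure
    {x | ∃ (S : ℕ → C) (hS : ∀ i, i ≤ d + 1 → P (S i)) (Y : ℕ → C)
        (a : ∀ l : ℕ, Y (l + 1) ⟶ S (l + 1)) (b : ∀ l : ℕ, S (l + 1) ⟶ Y l)
        (η : ∀ l : ℕ, Y l ⟶ (Y (l + 1))⟦(1 : ℤ)⟧),
        Y 0 = S 0 ∧ Y d = S (d + 1) ∧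
        (∀ l, l < d → (Triangle.mk (a l) (b l) (η l) ∈ distTriang C)) ∧
        x = ∑ i ∈ Finset.range (d + 2), ((-1 : ℤ)) ^ i •
            (if h : i ≤ d + 1 then clsSp C P (S i) (hS i h) else 0)}

/-- The Grothendieck group of the `(d+2)`-angulated category `𝒮`. -/
abbrev K0ang (d : ℕ) (P : C → Prop) := K0sp C P ⧸ angleRel C d P

end Part2
section Part3

variable (k : Type w) [Field k]
variable (C : Type u) [Category.{v} C] [Preadditive C] [CategoryTheory.Linear k C]
  [HasZeroObject C] [HasShift C ℤ] [∀ n : ℤ, (shiftFunctor C n).Additive]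
  [Pretriangulated C] [HasBinaryBiproducts C]

/-- The homological functor `F_𝒰 : C ⥤ Mod 𝒰`, `X ↦ C(−, X)|_𝒰`, with values in
`k`-linear contravariant functors on the full subcategory given by `P`. -/
noncomputable def FF (P : C → Prop) :
    C ⥤ ((ObjectProperty.FullSubcategory P)ᵒᵖ ⥤ ModuleCat.{v} k) :=
  linearYoneda k C ⋙
    (Functor.whiskeringLeft (ObjectProperty.FullSubcategory P)ᵒᵖ Cᵒᵖ (ModuleCat.{v} k)).obj
      (ObjectProperty.ι P).op

/-- A `𝒰`-module `G` is coherent if it admits a projective presentation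
`𝒰(−,U₁) ⟶ 𝒰(−,U₀) ⟶ G ⟶ 0`. -/
def Coherent (P : C → Prop) (G : (ObjectProperty.FullSubcategory P)ᵒᵖ ⥤ ModuleCat.{v} k) : Prop :=
  ∃ (U₁ U₀ : C) (_ : P U₁) (_ : P U₀) (α : (FF k C P).obj U₁ ⟶ (FF k C P).obj U₀)
    (π : (FF k C P).obj U₀ ⟶ G) (w : α ≫ π = 0),
    Epi π ∧ (ShortComplex.mk α π w).Exact

/-- The subgroup of relations coming from short exact sequences of coherent `𝒰`-modules. -/
def sesRel (P : C → Prop) :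
    AddSubgroup (FreeAbelianGroup {G : (ObjectProperty.FullSubcategory P)ᵒᵖ ⥤ ModuleCat.{v} k // Coherent k C P G}) :=
  AddSubgroup.closure
    {x | ∃ (A B D : {G : (ObjectProperty.FullSubcategory P)ᵒᵖ ⥤ ModuleCat.{v} k // Coherent k C P G})
        (f : A.1 ⟶ B.1) (g : B.1 ⟶ D.1) (w : f ≫ g = 0),
        Mono f ∧ Epi g ∧ (ShortComplex.mk f g w).Exact ∧
        x = FreeAbelianGroup.of B - FreeAbelianGroup.of A - FreeAbelianGroup.of D}

/-- The Grothendieck group `K₀(mod 𝒰)` of the abelian category of coherent `𝒰`-modules. -/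
abbrev K0mod (P : C → Prop) :=
  FreeAbelianGroup {G : (ObjectProperty.FullSubcategory P)ᵒᵖ ⥤ ModuleCat.{v} k // Coherent k C P G} ⧸ sesRel k C P

/-- The class of a coherent `𝒰`-module in `K₀(mod 𝒰)`. -/
def clsMod (P : C → Prop) (G : (ObjectProperty.FullSubcategory P)ᵒᵖ ⥤ ModuleCat.{v} k)
    (hG : Coherent k C P G) : K0mod k C P :=
  QuotientAddGroup.mk' (sesRel k C P) (FreeAbelianGroup.of ⟨G, hG⟩)

/-- A tower of triangles in `C` computing the index of an object `X₀` with respect to the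
`m`-cluster tilting subcategory given by `P`: objects `U 0, …, U (m-1)` of `𝒰`,
intermediate objects `X i` with `X 0 = X₀` and `X (m-1) = U (m-1)`, triangles
`X (i+1) ⟶ U i ⟶ X i ⟶ Σ X (i+1)`, in which each `μ i : U i ⟶ X i` is a `𝒰`-cover. -/
structure CoverTower (m : ℕ) (P : C → Prop) (X₀ : C) where
  U : ℕ → C
  X : ℕ → C
  a : ∀ i : ℕ, X (i + 1) ⟶ U i
  μ : ∀ i : ℕ, U i ⟶ X i
  ξ : ∀ i : ℕ, X i ⟶ (X (i + 1))⟦(1 : ℤ)⟧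
  hU : ∀ i, i < m → P (U i)
  hX0 : X 0 = X₀
  hlast : X (m - 1) = U (m - 1)
  tri : ∀ i, i < m - 1 → (Triangle.mk (a i) (μ i) (ξ i) ∈ distTriang C)
  cover : ∀ i, i < m - 1 → IsCover C P (μ i)

/-- `ind` is the index homomorphism `index_𝒰 : K₀^sp(C) → K₀^sp(𝒰)`: for every object and
every tower of `𝒰`-covers as in the definition of the index, it takes the value
`∑ (-1)^i [U_i]`. -/
def IsIndexHom (m : ℕ) (P : C → Prop)
    (ind : K0sp C (fun _ => True) →+ K0sp C P) : Prop :=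
  ∀ (X₀ : C) (t : CoverTower C m P X₀),
    ind (clsSp C (fun _ => True) X₀ trivial) =
      ∑ i ∈ Finset.range m, ((-1 : ℤ)) ^ i •
        (if h : i < m then clsSp C P (t.U i) (t.hU i h) else 0)

/-- `N` belongs to `𝒰 ∗ Σ𝒰`: there is a triangle `U₁ ⟶ U₀ ⟶ N ⟶ ΣU₁` with `U₀, U₁ ∈ 𝒰`. -/
def InStarShift (P : C → Prop) (N : C) : Prop :=
  ∃ (U₁ U₀ : C) (_ : P U₁) (_ : P U₀) (f : U₁ ⟶ U₀) (g : U₀ ⟶ N)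
    (h : N ⟶ U₁⟦(1 : ℤ)⟧), Triangle.mk f g h ∈ distTriang C

/-- `θ` is the homomorphism `θ_𝒰 : K₀(mod 𝒰) → K₀^sp(𝒰)` determined by
`θ([F_𝒰 N]) = index_𝒰(Σ⁻¹N) + index_𝒰(N)` for `N ∈ 𝒰 ∗ Σ𝒰`. -/
def IsTheta (P : C → Prop) (ind : K0sp C (fun _ => True) →+ K0sp C P)
    (θ : K0mod k C P →+ K0sp C P) : Prop :=
  ∀ (N : C), InStarShift C P N → ∀ hN : Coherent k C P ((FF k C P).obj N),
    θ (clsMod k C P ((FF k C P).obj N) hN) =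
      ind (clsSp C (fun _ => True) (N⟦(-1 : ℤ)⟧) trivial) +
        ind (clsSp C (fun _ => True) N trivial)

/-- A coherent `𝒰`-module is simple (as an object of `mod 𝒰`). -/
def SimpleCoh (P : C → Prop) (G : (ObjectProperty.FullSubcategory P)ᵒᵖ ⥤ ModuleCat.{v} k) : Prop :=
  ¬ IsZero G ∧ ∀ (H : (ObjectProperty.FullSubcategory P)ᵒᵖ ⥤ ModuleCat.{v} k), Coherent k C P H →
    ∀ f : H ⟶ G, Mono f → (IsIso f ∨ f = 0)

/-- A coherent `𝒰`-module `G` has finite length in `mod 𝒰`: it has a finite filtration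
`0 = F 0 ⟶ F 1 ⟶ ⋯ ⟶ F r = G` by coherent submodules with simple coherent quotients. -/
noncomputable def FiniteLengthCoh (P : C → Prop)
    (G : (ObjectProperty.FullSubcategory P)ᵒᵖ ⥤ ModuleCat.{v} k) : Prop :=
  ∃ (r : ℕ) (F : ℕ → (ObjectProperty.FullSubcategory P)ᵒᵖ ⥤ ModuleCat.{v} k)
    (f : ∀ i : ℕ, F i ⟶ F (i + 1)),
    IsZero (F 0) ∧ F r = G ∧ (∀ i, i ≤ r → Coherent k C P (F i)) ∧
    ∀ i, i < r → Mono (f i) ∧ Coherent k C P (cokernel (f i)) ∧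
      SimpleCoh k C P (cokernel (f i))

end Part3
section Part4

/-- The vertex set of the regular `N`-gon `P`, `N = (p+1)q+2`, with its cyclic structure. -/
abbrev Vertex (q p : ℕ) := ZMod ((p + 1) * q + 2)

/-- `{u,v}` is a `q`-allowable diagonal of the `N`-gon: it spans `1 + kq` vertices for
some positive integer `k` (equivalently, `v = u + (1 + kq)` with `1 ≤ k ≤ p`). -/
def Allowable (q p : ℕ) (u v : Vertex q p) : Prop :=
  ∃ j : ℕ, 1 ≤ j ∧ j ≤ p ∧ v = u + ((1 + j * q : ℕ) : Vertex q p)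

/-- `{u,v}` is a `q`-allowable diagonal or an edge of the `N`-gon. -/
def AllowableOrEdge (q p : ℕ) (u v : Vertex q p) : Prop :=
  Allowable q p u v ∨ v = u + 1 ∨ u = v + 1

/-- The four vertices `b₀ < a₀ < b₁ < a₁` occur in this cyclic order (anticlockwise),
all four being distinct. -/
def CyclicConfig (q p : ℕ) (b₀ a₀ b₁ a₁ : Vertex q p) : Prop :=
  ∃ r s t w : ℕ, 0 < r ∧ 0 < s ∧ 0 < t ∧ 0 < w ∧
    r + s + t + w = (p + 1) * q + 2 ∧
    a₀ = b₀ + (r : Vertex q p) ∧ b₁ = a₀ + (s : Vertex q p) ∧ a₁ = b₁ + (t : Vertex q p)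

/-- The diagonals `{a₀,a₁}` and `{b₀,b₁}` cross. -/
def Crossing (q p : ℕ) (a₀ a₁ b₀ b₁ : Vertex q p) : Prop :=
  CyclicConfig q p b₀ a₀ b₁ a₁ ∨ CyclicConfig q p a₀ b₀ a₁ b₁

variable (k : Type w) [Field k]
variable (C : Type u) [Category.{v} C] [Preadditive C] [CategoryTheory.Linear k C]
  [HasZeroObject C] [HasShift C ℤ] [∀ n : ℤ, (shiftFunctor C n).Additive]
  [Pretriangulated C] [HasBinaryBiproducts C] [HasFiniteBiproducts C]

/-- The geometric model of the `q`-cluster category `C_q(A_p)` of Dynkin type `A_p`: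
the indecomposable objects of `C` are identified with the `q`-allowable diagonals of a
regular `((p+1)q+2)`-gon, Hom-spaces between indecomposables are at most one-dimensional,
`C` is `(q+1)`-Calabi--Yau, the suspension acts on diagonals by rotation, and
`Ext^{1..q}(a,b) ≠ 0` precisely when the corresponding diagonals cross. -/
structure ClusterModel (q p : ℕ) : Type (max u v (w + 1)) where
  diag : Vertex q p → Vertex q p → C
  symm : ∀ u v, diag u v = diag v u
  indec : ∀ u v, Allowable q p u v → Indecomp C (diag u v)
  surj : ∀ X : C, Indecomp C X → ∃ u v, Allowable q p u v ∧ Nonempty (X ≅ diag u v)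
  inj : ∀ u v u' v', Allowable q p u v → Allowable q p u' v' →
    Nonempty (diag u v ≅ diag u' v') → (u = u' ∧ v = v') ∨ (u = v' ∧ v = u')
  homDim : ∀ X Y : C, Indecomp C X → Indecomp C Y → Module.finrank k (X ⟶ Y) ≤ 1
  serre : SerreFunctor k C
  hserre : serre.S = shiftFunctor C ((q : ℤ) + 1)
  shift : ∀ u v, Allowable q p u v →
    Nonempty ((diag u v)⟦(1 : ℤ)⟧ ≅ diag (u - 1) (v - 1))
  ext_iff : ∀ u v u' v', Allowable q p u v → Allowable q p u' v' →
    ((∃ i : ℕ, 1 ≤ i ∧ i ≤ q ∧ ∃ f : diag u v ⟶ (diag u' v')⟦(i : ℤ)⟧, f ≠ 0) ↔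
      Crossing q p u v u' v')
  krullSchmidt : ∀ X : C, ∃ (n : ℕ) (Z : Fin n → C),
    (∀ i, Indecomp C (Z i)) ∧ Nonempty (X ≅ ⨁ Z)

end Part4

section Aux

variable {C : Type u} [Category.{v} C] [Preadditive C]
  [HasZeroObject C] [HasShift C ℤ] [∀ n : ℤ, (shiftFunctor C n).Additive]
  [Pretriangulated C] [HasBinaryBiproducts C]

/-- The class of the zero object in the split Grothendieck group vanishes. -/
lemma clsSp_zero (P : C → Prop) (h : P 0) : clsSp C P 0 h = 0 := by
  have hgen : (FreeAbelianGroup.of (⟨(0 : C), h⟩ : {X : C // P X})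
      - FreeAbelianGroup.of ⟨(0 : C), h⟩ - FreeAbelianGroup.of ⟨(0 : C), h⟩) ∈ splitRel C P :=
    AddSubgroup.subset_closure (Or.inr ⟨⟨0, h⟩, ⟨0, h⟩, ⟨0, h⟩,
      ⟨(isZero_zero C).iso ((biprod_isZero_iff _ _).mpr ⟨isZero_zero C, isZero_zero C⟩)⟩, rfl⟩)
  have hmem : FreeAbelianGroup.of (⟨(0 : C), h⟩ : {X : C // P X}) ∈ splitRel C P := by
    have heq : FreeAbelianGroup.of (⟨(0 : C), h⟩ : {X : C // P X})
        = -(FreeAbelianGroup.of (⟨(0 : C), h⟩ : {X : C // P X})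
            - FreeAbelianGroup.of ⟨(0 : C), h⟩ - FreeAbelianGroup.of ⟨(0 : C), h⟩) := by
      abel
    rw [heq]
    exact neg_mem hgen
  exact (QuotientAddGroup.eq_zero_iff _).mpr hmem

/-- The zero object belongs to any cluster tilting subcategory. -/
lemma P_zero (m : ℕ) (P : C → Prop) (hP : IsClusterTilting C m P) : P 0 :=
  (hP.2.2.1 0).mpr (fun U _ i _ _ f =>
    ((shiftFunctor C (i : ℤ)).map_isZero (isZero_zero C)).eq_of_tgt f 0)

/-- Objects of a cluster tilting subcategory have no nonzero maps to positive shifts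
(up to degree `m - 1`) of objects of the subcategory. -/
lemma hom_vanish (m : ℕ) (P : C → Prop) (hP : IsClusterTilting C m P)
    (V U : C) (hV : P V) (hU : P U) (z : ℤ) (h1 : 1 ≤ z) (h2 : z ≤ (m : ℤ) - 1)
    (f : V ⟶ U⟦z⟧) : f = 0 := by
  lift z to ℕ using (by omega)
  exact (hP.2.2.1 U).mp hU V hV z (by omega) (by omega) f

/-- The triangle `0 ⟶ X ⟶ X ⟶ Σ0` is distinguished. -/
lemma triangle_zero_id (X : C) :
    Triangle.mk (0 : (0 : C) ⟶ X) (𝟙 X) (0 : X ⟶ (0 : C)⟦(1 : ℤ)⟧) ∈ distTriang C := by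
  have h0 : IsZero (((0 : C)⟦(-1 : ℤ)⟧)) :=
    (shiftFunctor C (-1 : ℤ)).map_isZero (isZero_zero C)
  refine isomorphic_distinguished _ (inv_rot_of_distTriang _ (contractible_distinguished X)) _ ?_
  refine Triangle.isoMk _ _ ((isZero_zero C).iso h0) (Iso.refl X) (Iso.refl X) ?_ ?_ ?_
  · apply (isZero_zero C).eq_of_src
  · simp [Triangle.invRotate, contractibleTriangle]; rfl
  · apply (((shiftFunctor C (1 : ℤ)).map_isZero h0)).eq_of_tgt

/-- The zero triangle is distinguished. -/
lemma triangle_zero :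
    Triangle.mk (0 : (0 : C) ⟶ (0 : C)) (0 : (0 : C) ⟶ (0 : C))
      (0 : (0 : C) ⟶ (0 : C)⟦(1 : ℤ)⟧) ∈ distTriang C := by
  have := triangle_zero_id (C := C) (0 : C)
  rwa [Limits.id_zero] at this

/-- The trivial tower of triangles computing the index of an object of `𝒰`. -/
noncomputable def trivTower (m : ℕ) (P : C → Prop) (hP0 : P 0) (V : C) (hV : P V) :
    CoverTower C m P V where
  U := fun i => match i with | 0 => V | _ + 1 => (0 : C)
  X := fun i => match i with | 0 => V | _ + 1 => (0 : C)
  a := fun _ => 0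
  μ := fun i => match i with | 0 => 𝟙 V | _ + 1 => 0
  ξ := fun _ => 0
  hU := fun i _ => match i with | 0 => hV | _ + 1 => hP0
  hX0 := rfl
  hlast := rfl
  tri := fun i _ => match i with
    | 0 => triangle_zero_id V
    | _ + 1 => triangle_zero
  cover := fun i _ => match i with
    | 0 => ⟨hV, fun U' _ f => ⟨f, Category.comp_id f⟩, fun φ hφ => by
        rw [Category.comp_id] at hφ; rw [hφ]; infer_instance⟩
    | _ + 1 => ⟨hP0, fun U' _ f => ⟨0, (isZero_zero C).eq_of_tgt _ _⟩, fun φ _ => by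
        have : φ = 𝟙 (0 : C) := (isZero_zero C).eq_of_src φ (𝟙 _)
        rw [this]; infer_instance⟩

/-- The index of an object of `𝒰` is its own class. -/
lemma ind_clsSp (m : ℕ) (hm : 2 ≤ m) (P : C → Prop) (hP0 : P 0)
    (ind : K0sp C (fun _ => True) →+ K0sp C P) (hind : IsIndexHom C m P ind)
    (V : C) (hV : P V) :
    ind (clsSp C (fun _ => True) V trivial) = clsSp C P V hV := by
  have h := hind V (trivTower m P hP0 V hV)
  rw [h, Finset.sum_eq_single 0]
  · rw [dif_pos (by omega : 0 < m), pow_zero, one_smul]; rfl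
  · intro b _ hbne
    obtain ⟨c, rfl⟩ := Nat.exists_eq_succ_of_ne_zero hbne
    rcases Nat.lt_or_ge (c + 1) m with hlt | hge
    · rw [dif_pos hlt, show clsSp C P ((trivTower m P hP0 V hV).U (c + 1))
        ((trivTower m P hP0 V hV).hU (c + 1) hlt) = 0 from clsSp_zero P hP0, smul_zero]
    · rw [dif_neg (by omega), smul_zero]
  · intro h0
    exact absurd (Finset.mem_range.mpr (by omega)) h0

/-- Homomorphisms out of a quotient of a free abelian group agree if they agree on the
classes of generators. -/
lemma hom_ext_quot {α : Type*} {S : AddSubgroup (FreeAbelianGroup α)} {A : Type*}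
    [AddCommGroup A] {φ ψ : FreeAbelianGroup α ⧸ S →+ A}
    (h : ∀ a : α, φ (QuotientAddGroup.mk' S (FreeAbelianGroup.of a))
      = ψ (QuotientAddGroup.mk' S (FreeAbelianGroup.of a))) : φ = ψ := by
  refine AddMonoidHom.ext fun x => ?_
  obtain ⟨v, rfl⟩ := QuotientAddGroup.mk'_surjective S x
  induction v using FreeAbelianGroup.induction_on with
  | zero => simp
  | of a => exact h a
  | neg a ih => simp only [map_neg]; rw [ih]
  | add a b iha ihb => simp only [map_add]; rw [iha, ihb]

/-- Induction principle for the Grothendieck group `K₀(C)`. -/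
lemma K0_induction {motive : K0 C → Prop} (h0 : motive 0)
    (hc : ∀ X : C, motive (cls C X)) (hn : ∀ x, motive x → motive (-x))
    (ha : ∀ x y, motive x → motive y → motive (x + y)) : ∀ y : K0 C, motive y := by
  intro y
  obtain ⟨w, rfl⟩ := QuotientAddGroup.mk'_surjective (triRel C) y
  obtain ⟨v, rfl⟩ := QuotientAddGroup.mk'_surjective (splitRel C (fun _ => True)) w
  induction v using FreeAbelianGroup.induction_on with
  | zero => simpa using h0
  | of a => exact hc a.1
  | neg a ih => simpa only [map_neg] using hn _ ih
  | add a b iha ihb => simpa only [map_add] using ha _ _ iha ihb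

/-- The Euler relation in `K₀(C)` associated to a distinguished triangle. -/
lemma cls_triangle (T : Triangle C) (hT : T ∈ distTriang C) :
    cls C T.obj₃ = cls C T.obj₂ - cls C T.obj₁ := by
  have hmem : (clsSp C (fun _ => True) T.obj₁ trivial - clsSp C (fun _ => True) T.obj₂ trivial
      + clsSp C (fun _ => True) T.obj₃ trivial) ∈ triRel C :=
    AddSubgroup.subset_closure ⟨T, hT, rfl⟩
  have h0 : piC C (clsSp C (fun _ => True) T.obj₁ trivial
      - clsSp C (fun _ => True) T.obj₂ trivial
      + clsSp C (fun _ => True) T.obj₃ trivial) = 0 :=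
    (QuotientAddGroup.eq_zero_iff _).mpr hmem
  rw [map_add, map_sub] at h0
  have h1 : cls C T.obj₁ - cls C T.obj₂ + cls C T.obj₃ = 0 := h0
  rw [← sub_eq_zero, ← h1]
  abel

/-- The key extension-vanishing step: if `T = (X' ⟶ U₀ ⟶ X ⟶ ΣX')` is a distinguished
triangle with `U₀ ∈ 𝒰` and `U₀ ⟶ X` a `𝒰`-precover, and `Ext^{1..s-1}(𝒰, X) = 0`,
then `Ext^{1..s}(𝒰, X') = 0`. -/
lemma ext_vanish_step (m : ℕ) (P : C → Prop)
    (hA : ∀ (V U : C), P V → P U → ∀ z : ℤ, 1 ≤ z → z ≤ (m : ℤ) - 1 → ∀ f : V ⟶ U⟦z⟧, f = 0)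
    (T : Triangle C) (hT : T ∈ distTriang C) (hU : P T.obj₂)
    (hlift : ∀ V : C, P V → ∀ f : V ⟶ T.obj₃, ∃ g : V ⟶ T.obj₂, g ≫ T.mor₂ = f)
    (s : ℤ) (hs : s ≤ (m : ℤ) - 1)
    (hX : ∀ V : C, P V → ∀ z : ℤ, 1 ≤ z → z + 1 ≤ s → ∀ f : V ⟶ T.obj₃⟦z⟧, f = 0) :
    ∀ V : C, P V → ∀ z : ℤ, 1 ≤ z → z ≤ s → ∀ f : V ⟶ T.obj₁⟦z⟧, f = 0 := by
  intro V hV z h1 h2 f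
  rcases h1.lt_or_eq with h1' | h1'
  · -- case `2 ≤ z`
    have hz : z - 1 + 1 = z := by omega
    have hT2 : (Triangle.shiftFunctor C (z - 1)).obj T ∈ distTriang C :=
      Triangle.shift_distinguished T hT (z - 1)
    have e1 := (shiftFunctorAdd' C (z - 1) 1 z hz).app T.obj₁
    have e2 := (shiftFunctorAdd' C (z - 1) 1 z hz).symm.app T.obj₂
    set T2 := (Triangle.shiftFunctor C (z - 1)).obj T with hT2def
    have hcomp : (f ≫ e1.hom) ≫ T2.mor₁⟦(1 : ℤ)⟧' = 0 := by
      have h0 : ((f ≫ e1.hom) ≫ T2.mor₁⟦(1 : ℤ)⟧') ≫ e2.hom = 0 :=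
        hA V T.obj₂ hV hU z h1 (by omega) _
      exact (cancel_mono e2.hom).mp (h0.trans zero_comp.symm)
    obtain ⟨gg, hgg⟩ := Triangle.coyoneda_exact₁ T2 hT2 (f ≫ e1.hom) hcomp
    have hgg0 : gg = 0 := hX V hV (z - 1) (by omega) (by omega) gg
    rw [hgg0, zero_comp] at hgg
    rw [← cancel_mono e1.hom, zero_comp]
    exact hgg
  · -- case `z = 1`
    subst h1'
    obtain ⟨gg, hgg⟩ := Triangle.coyoneda_exact₁ T hT f
      (hA V T.obj₂ hV hU 1 le_rfl (by omega) _)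
    obtain ⟨g2, hg2⟩ := hlift V hV gg
    rw [hgg, ← hg2, Category.assoc, comp_distTriang_mor_zero₂₃ T hT, comp_zero]

/-- Every class `[X]` in `K₀(C)` lies in the image of `π_C ∘ j_𝒰`. -/
lemma cls_mem_range (m : ℕ) (hm : 2 ≤ m) (P : C → Prop) (hP : IsClusterTilting C m P)
    (j : K0sp C P →+ K0sp C (fun _ => True))
    (hj : ∀ (X : C) (hX : P X), j (clsSp C P X hX) = clsSp C (fun _ => True) X trivial) :
    ∀ (r : ℕ) (X : C),
      (∀ V, P V → ∀ z : ℤ, 1 ≤ z → z + r ≤ (m : ℤ) - 1 → ∀ f : V ⟶ X⟦z⟧, f = 0) →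
      cls C X ∈ ((piC C).comp j).range := by
  intro r
  induction r with
  | zero =>
    intro X hX
    have hPX : P X := (hP.2.2.1 X).mpr (fun U hU i h1 h2 f =>
      hX U hU (i : ℤ) (by omega) (by push_cast; omega) f)
    exact ⟨clsSp C P X hPX, by
      simp only [AddMonoidHom.comp_apply]; rw [hj X hPX]; rfl⟩
  | succ r ih =>
    intro X hX
    obtain ⟨U₀, hU₀, μ, hlift⟩ := hP.1 X
    obtain ⟨Z, g', h', hTmem⟩ := distinguished_cocone_triangle μ
    have hT : (Triangle.mk μ g' h').invRotate ∈ distTriang C :=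
      inv_rot_of_distTriang _ hTmem
    set T := (Triangle.mk μ g' h').invRotate with hTdef
    have hA : ∀ (V U : C), P V → P U → ∀ z : ℤ, 1 ≤ z → z ≤ (m : ℤ) - 1 →
        ∀ f : V ⟶ U⟦z⟧, f = 0 := hom_vanish m P hP
    have hlift' : ∀ V : C, P V → ∀ f : V ⟶ T.obj₃, ∃ g : V ⟶ T.obj₂, g ≫ T.mor₂ = f :=
      fun V hV f => hlift V hV f
    have hvan := ext_vanish_step m P hA T hT hU₀ hlift' ((m : ℤ) - 1 - r) (by omega)
      (fun V hV z h1 h2 f => hX V hV z h1 (by push_cast; push_cast at h2; omega) f)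
    have h1 := ih T.obj₁ (fun V hV z hz1 hz2 f =>
      hvan V hV z hz1 (by push_cast at hz2; omega) f)
    have h2 : cls C U₀ ∈ ((piC C).comp j).range :=
      ⟨clsSp C P U₀ hU₀, by simp only [AddMonoidHom.comp_apply]; rw [hj U₀ hU₀]; rfl⟩
    have h3 := cls_triangle T hT
    have hobj : cls C X = cls C U₀ - cls C T.obj₁ := h3
    rw [hobj]
    exact sub_mem h2 h1

end Aux

/-- **Proposition 3.4.** Suppose there exists a group homomorphism
`g_𝒰 : K₀^sp(𝒰)/im θ_𝒰 → K₀(𝒞)` with `g_𝒰 ∘ π_𝒰 = π_𝒞 ∘ j_𝒰`. Then `g_𝒰` and the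
homomorphism `f_𝒰 : K₀(𝒞) → K₀^sp(𝒰)/im θ_𝒰` satisfying `f_𝒰 ∘ π_𝒞 = π_𝒰 ∘ index_𝒰`
are mutually inverse, so `K₀^sp(𝒰)/im θ_𝒰 ≅ K₀(𝒞)`. -/
theorem proposition34
    {k : Type w} [Field k]
    (C : Type u) [Category.{v} C] [Preadditive C] [CategoryTheory.Linear k C]
    [HasZeroObject C] [HasShift C ℤ] [∀ n : ℤ, (shiftFunctor C n).Additive]
    [Pretriangulated C] [HasBinaryBiproducts C] [IsIdempotentComplete C]
    [∀ X Y : C, Module.Finite k (X ⟶ Y)]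
    (m : ℕ) (hm : 2 ≤ m)
    (P : C → Prop) (hP : IsClusterTilting C m P)
    (ind : K0sp C (fun _ => True) →+ K0sp C P) (hind : IsIndexHom C m P ind)
    (θ : K0mod k C P →+ K0sp C P) (hθ : IsTheta k C P ind θ)
    (j : K0sp C P →+ K0sp C (fun _ => True))
    (hj : ∀ (X : C) (hX : P X), j (clsSp C P X hX) = clsSp C (fun _ => True) X trivial)
    (g : (K0sp C P ⧸ θ.range) →+ K0 C)
    (hg : g.comp (QuotientAddGroup.mk' θ.range) = (piC C).comp j)
    (f : K0 C →+ (K0sp C P ⧸ θ.range))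
    (hf : f.comp (piC C) = (QuotientAddGroup.mk' θ.range).comp ind) :
    f.comp g = AddMonoidHom.id _ ∧ g.comp f = AddMonoidHom.id _ ∧
      Nonempty ((K0sp C P ⧸ θ.range) ≃+ K0 C) := by
  have hP0 : P 0 := P_zero m P hP
  -- `ind ∘ j = id` on `K₀^sp(𝒰)`.
  have e0 : ind.comp j = AddMonoidHom.id _ := by
    apply hom_ext_quot
    intro a
    show ind (j (clsSp C P a.1 a.2)) = clsSp C P a.1 a.2
    rw [hj a.1 a.2]
    exact ind_clsSp m hm P hP0 ind hind a.1 a.2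
  -- `f ∘ g = id`.
  have claim1 : f.comp g = AddMonoidHom.id _ := by
    have e1 : (f.comp g).comp (QuotientAddGroup.mk' θ.range)
        = QuotientAddGroup.mk' θ.range := by
      rw [AddMonoidHom.comp_assoc, hg, ← AddMonoidHom.comp_assoc, hf,
        AddMonoidHom.comp_assoc, e0, AddMonoidHom.comp_id]
    refine AddMonoidHom.ext fun x => ?_
    obtain ⟨z, rfl⟩ := QuotientAddGroup.mk'_surjective θ.range x
    exact DFunLike.congr_fun e1 z
  -- `g` is surjective.
  have hsurj : ∀ y : K0 C, ∃ x, g x = y := by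
    have hmem : ∀ y : K0 C, y ∈ g.range := by
      refine K0_induction (zero_mem _) ?_ (fun x hx => neg_mem hx)
        (fun x y hx hy => add_mem hx hy)
      intro X
      have h1 := cls_mem_range m hm P hP j hj m X
        (fun V hV z h1 h2 f => absurd h2 (by push_cast; omega))
      obtain ⟨z, hz⟩ := h1
      exact ⟨QuotientAddGroup.mk' θ.range z, by
        rw [show g (QuotientAddGroup.mk' θ.range z) = ((piC C).comp j) z from
          DFunLike.congr_fun hg z]; exact hz⟩
    intro y
    obtain ⟨x, hx⟩ := hmem y
    exact ⟨x, hx⟩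
  -- `g ∘ f = id`.
  have claim2 : g.comp f = AddMonoidHom.id _ := by
    refine AddMonoidHom.ext fun y => ?_
    obtain ⟨x, rfl⟩ := hsurj y
    show g (f (g x)) = g x
    rw [show f (g x) = x from DFunLike.congr_fun claim1 x]
  exact ⟨claim1, claim2, ⟨AddMonoidHom.toAddEquiv g f claim1 claim2⟩⟩

end ClusterK0
end

section
/- Let {a₀,a₁} and {b₀,b₁} be crossing q-allowable diagonals of P with b₀ < a₀ < b₁ < a₁ in the cyclic order on vertices. Then {a₀,b₀} is a q-allowable diagonal or an edge of P if and only if {a₁,b₁} is a q-allowable diagonal or an edge of P. (Lemma 7.11) -/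
open CategoryTheory CategoryTheory.Limits CategoryTheory.Pretriangulated ZeroObject

namespace ClusterK0

universe w v u

variable (k : Type w) [Field k]
variable (C : Type u) [Category.{v} C] [Preadditive C] [CategoryTheory.Linear k C]
  [HasZeroObject C] [HasShift C ℤ] [∀ n : ℤ, (shiftFunctor C n).Additive]
  [Pretriangulated C] [HasBinaryBiproducts C]

/-- Auxiliary: if `x = y + r` with `1 ≤ r ≤ N - 3`, then `{x, y}` is allowable-or-edge
iff `r ≡ 1 (mod q)`. -/
lemma allowableOrEdge_iff_modEq (q p : ℕ) (hq : 0 < q) (x y : Vertex q p) (r : ℕ)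
    (hr1 : 1 ≤ r) (hr2 : r + 3 ≤ (p + 1) * q + 2)
    (hxy : x = y + (r : Vertex q p)) :
    AllowableOrEdge q p x y ↔ r ≡ 1 [MOD q] := by
  have hpq : (p + 1) * q = p * q + q := by ring
  constructor
  · rintro (⟨j, hj1, hj2, hyx⟩ | h | h)
    · -- y = x + (1 + j q)
      rw [hxy] at hyx
      have h0 : ((r + (1 + j * q) : ℕ) : Vertex q p) = 0 := by
        push_cast
        push_cast at hyx
        rw [add_assoc] at hyx
        exact left_eq_add.mp hyx
      have hdvd : ((p + 1) * q + 2) ∣ (r + (1 + j * q)) :=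
        (ZMod.natCast_eq_zero_iff _ _).mp h0
      obtain ⟨c, hc⟩ := hdvd
      have hjq : j * q ≤ p * q := Nat.mul_le_mul hj2 (le_refl q)
      have hc1 : c = 1 := by
        rcases Nat.lt_or_ge c 2 with h2 | h2
        · interval_cases c <;> omega
        · exfalso
          have : ((p + 1) * q + 2) * 2 ≤ ((p + 1) * q + 2) * c :=
            Nat.mul_le_mul (le_refl _) h2
          omega
      subst hc1
      -- r + 1 + j*q = (p+1)q + 2, so r ≡ 1 mod q
      have hsplit : (p + 1 - j) * q + j * q = (p + 1) * q := by
        rw [← Nat.add_mul]; congr 1; omega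
      have hreq : r = 1 + (p + 1 - j) * q := by omega
      rw [hreq]
      unfold Nat.ModEq
      simp [Nat.add_mul_mod_self_right]
    · -- y = x + 1
      exfalso
      rw [hxy] at h
      have h0 : ((r + 1 : ℕ) : Vertex q p) = 0 := by
        push_cast
        have := (left_eq_add).mp (by rw [add_assoc] at h; exact h)
        linear_combination this
      have hdvd : ((p + 1) * q + 2) ∣ (r + 1) :=
        (ZMod.natCast_eq_zero_iff _ _).mp h0
      have := Nat.le_of_dvd (by omega) hdvd
      omega
    · -- x = y + 1
      rw [hxy] at h
      have h1 : ((r : ℕ) : Vertex q p) = ((1 : ℕ) : Vertex q p) := by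
        push_cast
        exact add_left_cancel h
      have := (ZMod.natCast_eq_natCast_iff _ _ _).mp h1
      rw [Nat.ModEq, Nat.mod_eq_of_lt (by omega), Nat.mod_eq_of_lt (by omega)] at this
      subst this
      rfl
  · intro hmod
    have hdvd : q ∣ r - 1 := (Nat.modEq_iff_dvd' hr1).mp hmod.symm
    obtain ⟨m, hm⟩ := hdvd
    have hr : r = q * m + 1 := by omega
    have hmp : m ≤ p := by
      by_contra hc
      push_neg at hc
      have : q * (p + 1) ≤ q * m := Nat.mul_le_mul (le_refl q) hc
      have hq2 : q * (p + 1) = (p + 1) * q := by ring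
      omega
    rcases Nat.eq_zero_or_pos m with hm0 | hm0
    · right; right
      subst hm0
      have : r = 1 := by omega
      subst this
      simpa using hxy
    · left
      refine ⟨p + 1 - m, by omega, by omega, ?_⟩
      have hkey : r + (1 + (p + 1 - m) * q) = (p + 1) * q + 2 := by
        have h1 : m * q + (p + 1 - m) * q = (p + 1) * q := by
          rw [← Nat.add_mul]; congr 1; omega
        have h2 : q * m = m * q := by ring
        omega
      rw [hxy]
      have : ((1 + (p + 1 - m) * q : ℕ) : Vertex q p) + ((r : ℕ) : Vertex q p) = 0 := by
        rw [← Nat.cast_add]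
        rw [show (1 + (p + 1 - m) * q) + r = (p + 1) * q + 2 by omega]
        exact ZMod.natCast_self _
      rw [add_assoc, add_comm ((r : ℕ) : Vertex q p), this, add_zero]

/-- **Lemma 7.11.** Let `{a₀,a₁}` and `{b₀,b₁}` be crossing `q`-allowable diagonals of the
regular `((p+1)q+2)`-gon with `b₀ < a₀ < b₁ < a₁` in the cyclic order on vertices. Then
`{a₀,b₀}` is a `q`-allowable diagonal or an edge if and only if `{a₁,b₁}` is a
`q`-allowable diagonal or an edge. -/
theorem lemma711
    (q p : ℕ) (hq : 0 < q) (hp : 0 < p)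
    (a₀ a₁ b₀ b₁ : Vertex q p)
    (ha : Allowable q p a₀ a₁) (hb : Allowable q p b₀ b₁)
    (hconf : CyclicConfig q p b₀ a₀ b₁ a₁) :
    AllowableOrEdge q p a₀ b₀ ↔ AllowableOrEdge q p a₁ b₁ := by
  obtain ⟨r, s, t, w, hr0, hs0, ht0, hw0, hsum, hra, hsb, hta⟩ := hconf
  obtain ⟨ja, hja1, hja2, haeq⟩ := ha
  obtain ⟨jb, hjb1, hjb2, hbeq⟩ := hb
  have hjaq : ja * q ≤ p * q := Nat.mul_le_mul hja2 (le_refl q)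
  have hjbq : jb * q ≤ p * q := Nat.mul_le_mul hjb2 (le_refl q)
  have hpq : (p + 1) * q = p * q + q := by ring
  -- integer equality r + s = 1 + jb * q
  have hrs : r + s = 1 + jb * q := by
    have h1 : b₁ = b₀ + ((r + s : ℕ) : Vertex q p) := by
      rw [hsb, hra]; push_cast; rw [add_assoc]
    have h2 : ((r + s : ℕ) : Vertex q p) = ((1 + jb * q : ℕ) : Vertex q p) :=
      add_left_cancel (h1.symm.trans hbeq)
    have h3 := (ZMod.natCast_eq_natCast_iff _ _ _).mp h2
    rw [Nat.ModEq, Nat.mod_eq_of_lt (by omega), Nat.mod_eq_of_lt (by omega)] at h3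
    exact h3
  -- integer equality s + t = 1 + ja * q
  have hst : s + t = 1 + ja * q := by
    have h1 : a₁ = a₀ + ((s + t : ℕ) : Vertex q p) := by
      rw [hta, hsb]; push_cast; rw [add_assoc]
    have h2 : ((s + t : ℕ) : Vertex q p) = ((1 + ja * q : ℕ) : Vertex q p) :=
      add_left_cancel (h1.symm.trans haeq)
    have h3 := (ZMod.natCast_eq_natCast_iff _ _ _).mp h2
    rw [Nat.ModEq, Nat.mod_eq_of_lt (by omega), Nat.mod_eq_of_lt (by omega)] at h3
    exact h3
  have hrsm : r + s ≡ 1 [MOD q] := by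
    rw [hrs]; unfold Nat.ModEq; simp [Nat.add_mul_mod_self_right]
  have hstm : s + t ≡ 1 [MOD q] := by
    rw [hst]; unfold Nat.ModEq; simp [Nat.add_mul_mod_self_right]
  have key₀ := allowableOrEdge_iff_modEq q p hq a₀ b₀ r hr0 (by omega) hra
  have key₁ := allowableOrEdge_iff_modEq q p hq a₁ b₁ t ht0 (by omega) hta
  rw [key₀, key₁]
  constructor
  · intro hr1
    have hs00 : s ≡ 0 [MOD q] :=
      hr1.add_left_cancel (by simpa using hrsm)
    have : 0 + t ≡ 1 [MOD q] := ((hs00.add_right t).symm).trans hstm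
    simpa using this
  · intro ht1
    have hs00 : s ≡ 0 [MOD q] :=
      ht1.add_right_cancel (by simpa using hstm)
    have : r + 0 ≡ 1 [MOD q] := ((hs00.add_left r).symm).trans hrsm
    simpa using this

end ClusterK0
end
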